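/- Let φ(θ; y, a, b) = y − b√(1 − (θ/a)²), defined for a > 0, b ∈ ℝ, and |θ| < a. Then the 3×3 determinant det[[∂_y φ, ∂_a φ, ∂_b φ], [∂_y ∂_θ φ, ∂_a ∂_θ φ, ∂_b ∂_θ φ], [∂_y ∂_θ² φ, ∂_a ∂_θ² φ, ∂_b ∂_θ² φ]] equals 2bθ³ / (a(a² − θ²)³). -/

import Mathlib

/-- `φ(θ; y, a, b) = y − b√(1 − (θ/a)²)`. -/
noncomputable def phiEll (θ y a b : ℝ) : ℝ := y - b * Real.sqrt (1 - (θ / a) ^ 2)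

lemma sqrt_one_sub (a t : ℝ) (ha : 0 < a) :
    Real.sqrt (1 - (t / a) ^ 2) = Real.sqrt (a ^ 2 - t ^ 2) / a := by
  rw [show (1 - (t / a) ^ 2) = (1 / a) ^ 2 * (a ^ 2 - t ^ 2) by field_simp,
    Real.sqrt_mul (sq_nonneg _), Real.sqrt_sq (by positivity : (0:ℝ) ≤ 1 / a)]
  ring

lemma phi_eq (y a b : ℝ) (ha : 0 < a) :
    (fun t => phiEll t y a b) = fun t => y - b / a * Real.sqrt (a ^ 2 - t ^ 2) := by
  funext t
  rw [phiEll, sqrt_one_sub a t ha]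
  ring

/-- derivative in `t` of `√(a² - t²)` -/
lemma hd_t (a t : ℝ) (h : 0 < a ^ 2 - t ^ 2) :
    HasDerivAt (fun t => Real.sqrt (a ^ 2 - t ^ 2)) (-t / Real.sqrt (a ^ 2 - t ^ 2)) t := by
  have h1 : HasDerivAt (fun t : ℝ => a ^ 2 - t ^ 2) (-(2 * t)) t := by
    simpa using ((hasDerivAt_pow 2 t).const_sub (a ^ 2))
  have h2 := (Real.hasDerivAt_sqrt (ne_of_gt h)).comp t h1
  have hs : Real.sqrt (a ^ 2 - t ^ 2) ≠ 0 := by positivity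
  refine h2.congr_deriv ?_
  field_simp

/-- derivative in `a` of `√(a² - θ²)` -/
lemma hd_a (a θ : ℝ) (h : 0 < a ^ 2 - θ ^ 2) :
    HasDerivAt (fun a => Real.sqrt (a ^ 2 - θ ^ 2)) (a / Real.sqrt (a ^ 2 - θ ^ 2)) a := by
  have h1 : HasDerivAt (fun a : ℝ => a ^ 2 - θ ^ 2) (2 * a) a := by
    simpa using ((hasDerivAt_pow 2 a).sub_const (θ ^ 2))
  have h2 := (Real.hasDerivAt_sqrt (ne_of_gt h)).comp a h1
  have hs : Real.sqrt (a ^ 2 - θ ^ 2) ≠ 0 := by positivity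
  refine h2.congr_deriv ?_
  field_simp

lemma pos_of_abs_lt {θ a : ℝ} (h : |θ| < a) : 0 < a ^ 2 - θ ^ 2 := by
  have h1 := abs_nonneg θ
  have h2 := sq_abs θ
  nlinarith

lemma deriv_phi (y a b t : ℝ) (ha : 0 < a) (h : |t| < a) :
    deriv (fun t => phiEll t y a b) t = b / a * (t / Real.sqrt (a ^ 2 - t ^ 2)) := by
  have hpos := pos_of_abs_lt h
  rw [phi_eq y a b ha]
  have hd := ((hd_t a t hpos).const_mul (b / a)).const_sub y
  rw [hd.deriv]
  ring

lemma isOpen_ball (a : ℝ) : IsOpen {t : ℝ | |t| < a} :=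
  isOpen_lt continuous_abs continuous_const

lemma id1 (y a b θ : ℝ) (ha : 0 < a) (hθ : |θ| < a) :
    iteratedDeriv 1 (fun t => phiEll t y a b) θ
      = b / a * (θ / Real.sqrt (a ^ 2 - θ ^ 2)) := by
  rw [iteratedDeriv_one, deriv_phi y a b θ ha hθ]

lemma id2 (y a b θ : ℝ) (ha : 0 < a) (hθ : |θ| < a) :
    iteratedDeriv 2 (fun t => phiEll t y a b) θ
      = b * a / (Real.sqrt (a ^ 2 - θ ^ 2)) ^ 3 := by
  have hpos := pos_of_abs_lt hθ
  have hr0 : 0 < Real.sqrt (a ^ 2 - θ ^ 2) := Real.sqrt_pos.mpr hpos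
  have h21 : iteratedDeriv 2 (fun t => phiEll t y a b)
      = deriv (deriv (fun t => phiEll t y a b)) := by
    rw [show (2 : ℕ) = 1 + 1 from rfl, iteratedDeriv_succ, iteratedDeriv_one]
  rw [h21]
  have hev : deriv (fun t => phiEll t y a b)
      =ᶠ[nhds θ] fun t => b / a * (t / Real.sqrt (a ^ 2 - t ^ 2)) := by
    filter_upwards [(isOpen_ball a).mem_nhds hθ] with t ht
    exact deriv_phi y a b t ha ht
  rw [hev.deriv_eq]
  -- derivative of t ↦ (b/a) * (t / √(a²-t²)) at θ
  have hd : HasDerivAt (fun t => b / a * (t / Real.sqrt (a ^ 2 - t ^ 2)))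
      (b / a * ((1 * Real.sqrt (a ^ 2 - θ ^ 2) - θ * (-θ / Real.sqrt (a ^ 2 - θ ^ 2)))
        / (Real.sqrt (a ^ 2 - θ ^ 2)) ^ 2)) θ :=
    (((hasDerivAt_id' (x := θ)).div (hd_t a θ hpos) (ne_of_gt hr0)).const_mul (b / a))
  rw [hd.deriv]
  have hr2 : Real.sqrt (a ^ 2 - θ ^ 2) ^ 2 = a ^ 2 - θ ^ 2 := Real.sq_sqrt hpos.le
  field_simp
  linear_combination b * hr2

lemma isOpen_gt_abs (θ : ℝ) : IsOpen {a : ℝ | |θ| < a} :=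
  isOpen_lt continuous_const continuous_id

-- Row 0 entries
lemma E00 (θ y a b : ℝ) : deriv (fun y' : ℝ => phiEll θ y' a b) y = 1 := by
  simp only [phiEll]
  exact ((hasDerivAt_id' (x := y)).sub_const _).deriv

lemma E01 (θ y a b : ℝ) (ha : 0 < a) (hθ : |θ| < a) :
    deriv (fun a' : ℝ => phiEll θ y a' b) a
      = -(b * θ ^ 2) / (a ^ 2 * Real.sqrt (a ^ 2 - θ ^ 2)) := by
  have hpos := pos_of_abs_lt hθ
  have hr0 : 0 < Real.sqrt (a ^ 2 - θ ^ 2) := Real.sqrt_pos.mpr hpos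
  have hr2 : Real.sqrt (a ^ 2 - θ ^ 2) ^ 2 = a ^ 2 - θ ^ 2 := Real.sq_sqrt hpos.le
  have hev : (fun a' : ℝ => phiEll θ y a' b)
      =ᶠ[nhds a] fun a' => y - b * (Real.sqrt (a' ^ 2 - θ ^ 2) / a') := by
    filter_upwards [(isOpen_gt_abs θ).mem_nhds hθ] with a' ha'
    have ha'0 : 0 < a' := lt_of_le_of_lt (abs_nonneg θ) ha'
    rw [phiEll, sqrt_one_sub a' θ ha'0]
  rw [hev.deriv_eq]
  have hd := (((hd_a a θ hpos).div (hasDerivAt_id' (x := a)) ha.ne').const_mul b).const_sub y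
  rw [HasDerivAt.deriv (f := fun a' : ℝ => y - b * (Real.sqrt (a' ^ 2 - θ ^ 2) / a')) hd]
  field_simp
  linear_combination b * hr2

lemma E02 (θ y a b : ℝ) (ha : 0 < a) :
    deriv (fun b' : ℝ => phiEll θ y a b') b = -(Real.sqrt (a ^ 2 - θ ^ 2) / a) := by
  simp only [phiEll]
  rw [(((hasDerivAt_id' (x := b)).mul_const _).const_sub y).deriv, sqrt_one_sub a θ ha]
  ring

-- Row 1 entries
lemma E10 (θ y a b : ℝ) (ha : 0 < a) (hθ : |θ| < a) :
    deriv (fun y' : ℝ => iteratedDeriv 1 (fun t => phiEll t y' a b) θ) y = 0 := by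
  have : (fun y' : ℝ => iteratedDeriv 1 (fun t => phiEll t y' a b) θ)
      = fun _ => b / a * (θ / Real.sqrt (a ^ 2 - θ ^ 2)) :=
    funext fun y' => id1 y' a b θ ha hθ
  rw [this, deriv_const]

lemma E11 (θ y a b : ℝ) (ha : 0 < a) (hθ : |θ| < a) :
    deriv (fun a' : ℝ => iteratedDeriv 1 (fun t => phiEll t y a' b) θ) a
      = -(b * θ * (2 * a ^ 2 - θ ^ 2)) / (a ^ 2 * Real.sqrt (a ^ 2 - θ ^ 2) ^ 3) := by
  have hpos := pos_of_abs_lt hθ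
  have hr0 : 0 < Real.sqrt (a ^ 2 - θ ^ 2) := Real.sqrt_pos.mpr hpos
  have hr2 : Real.sqrt (a ^ 2 - θ ^ 2) ^ 2 = a ^ 2 - θ ^ 2 := Real.sq_sqrt hpos.le
  have hev : (fun a' : ℝ => iteratedDeriv 1 (fun t => phiEll t y a' b) θ)
      =ᶠ[nhds a] fun a' => b * θ / (a' * Real.sqrt (a' ^ 2 - θ ^ 2)) := by
    filter_upwards [(isOpen_gt_abs θ).mem_nhds hθ] with a' ha'
    have ha'0 : 0 < a' := lt_of_le_of_lt (abs_nonneg θ) ha'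
    rw [id1 y a' b θ ha'0 ha']
    ring
  rw [hev.deriv_eq]
  have hd := (hasDerivAt_const a (b * θ)).div ((hasDerivAt_id' (x := a)).mul (hd_a a θ hpos))
    (mul_pos ha hr0).ne'
  rw [HasDerivAt.deriv (f := fun a' : ℝ => b * θ / (a' * Real.sqrt (a' ^ 2 - θ ^ 2))) hd]
  simp only [Pi.mul_apply]
  field_simp
  linear_combination (-θ * b) * hr2

lemma E12 (θ y a b : ℝ) (ha : 0 < a) (hθ : |θ| < a) :
    deriv (fun b' : ℝ => iteratedDeriv 1 (fun t => phiEll t y a b') θ) b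
      = θ / (a * Real.sqrt (a ^ 2 - θ ^ 2)) := by
  have hpos := pos_of_abs_lt hθ
  have hr0 : 0 < Real.sqrt (a ^ 2 - θ ^ 2) := Real.sqrt_pos.mpr hpos
  have : (fun b' : ℝ => iteratedDeriv 1 (fun t => phiEll t y a b') θ)
      = fun b' => b' * (θ / (a * Real.sqrt (a ^ 2 - θ ^ 2))) := by
    funext b'
    rw [id1 y a b' θ ha hθ]
    ring
  rw [this, ((hasDerivAt_id' (x := b)).mul_const _).deriv, one_mul]

-- Row 2 entries
lemma E20 (θ y a b : ℝ) (ha : 0 < a) (hθ : |θ| < a) :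
    deriv (fun y' : ℝ => iteratedDeriv 2 (fun t => phiEll t y' a b) θ) y = 0 := by
  have : (fun y' : ℝ => iteratedDeriv 2 (fun t => phiEll t y' a b) θ)
      = fun _ => b * a / (Real.sqrt (a ^ 2 - θ ^ 2)) ^ 3 :=
    funext fun y' => id2 y' a b θ ha hθ
  rw [this, deriv_const]

lemma E21 (θ y a b : ℝ) (ha : 0 < a) (hθ : |θ| < a) :
    deriv (fun a' : ℝ => iteratedDeriv 2 (fun t => phiEll t y a' b) θ) a
      = -(b * (2 * a ^ 2 + θ ^ 2)) / (Real.sqrt (a ^ 2 - θ ^ 2)) ^ 5 := by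
  have hpos := pos_of_abs_lt hθ
  have hr0 : 0 < Real.sqrt (a ^ 2 - θ ^ 2) := Real.sqrt_pos.mpr hpos
  have hr2 : Real.sqrt (a ^ 2 - θ ^ 2) ^ 2 = a ^ 2 - θ ^ 2 := Real.sq_sqrt hpos.le
  have hev : (fun a' : ℝ => iteratedDeriv 2 (fun t => phiEll t y a' b) θ)
      =ᶠ[nhds a] fun a' => b * a' / (Real.sqrt (a' ^ 2 - θ ^ 2)) ^ 3 := by
    filter_upwards [(isOpen_gt_abs θ).mem_nhds hθ] with a' ha'
    have ha'0 : 0 < a' := lt_of_le_of_lt (abs_nonneg θ) ha'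
    rw [id2 y a' b θ ha'0 ha']
  rw [hev.deriv_eq]
  have hd := ((hasDerivAt_id' (x := a)).const_mul b).div ((hd_a a θ hpos).pow 3) (pow_pos hr0 3).ne'
  rw [HasDerivAt.deriv (f := fun a' : ℝ => b * a' / (Real.sqrt (a' ^ 2 - θ ^ 2)) ^ 3) hd]
  simp only [Pi.pow_apply]
  norm_num
  field_simp
  linear_combination b * hr2

lemma E22 (θ y a b : ℝ) (ha : 0 < a) (hθ : |θ| < a) :
    deriv (fun b' : ℝ => iteratedDeriv 2 (fun t => phiEll t y a b') θ) b
      = a / (Real.sqrt (a ^ 2 - θ ^ 2)) ^ 3 := by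
  have : (fun b' : ℝ => iteratedDeriv 2 (fun t => phiEll t y a b') θ)
      = fun b' => b' * (a / (Real.sqrt (a ^ 2 - θ ^ 2)) ^ 3) := by
    funext b'
    rw [id2 y a b' θ ha hθ]
    ring
  rw [this, ((hasDerivAt_id' (x := b)).mul_const _).deriv, one_mul]

/-- for `a > 0`, `|θ| < a`, the determinant of the 3×3 matrix with
rows indexed by the number of θ-derivatives (0, 1, 2) and columns by the
parameters (y, a, b) equals `2bθ³ / (a(a² − θ²)³)`. -/
theorem stmt_2 (θ y a b : ℝ) (ha : 0 < a) (hθ : |θ| < a) :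
    (Matrix.of fun r c : Fin 3 =>
      ![deriv (fun y' : ℝ => iteratedDeriv r.1 (fun t => phiEll t y' a b) θ) y,
        deriv (fun a' : ℝ => iteratedDeriv r.1 (fun t => phiEll t y a' b) θ) a,
        deriv (fun b' : ℝ => iteratedDeriv r.1 (fun t => phiEll t y a b') θ) b] c).det
    = 2 * b * θ ^ 3 / (a * (a ^ 2 - θ ^ 2) ^ 3) := by
  have hpos := pos_of_abs_lt hθ
  have hr0 : 0 < Real.sqrt (a ^ 2 - θ ^ 2) := Real.sqrt_pos.mpr hpos
  have hr2 : Real.sqrt (a ^ 2 - θ ^ 2) ^ 2 = a ^ 2 - θ ^ 2 := Real.sq_sqrt hpos.le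
  rw [Matrix.det_fin_three]
  simp only [Matrix.of_apply, Matrix.cons_val_zero, Matrix.cons_val_one, Matrix.head_cons,
    Matrix.cons_val_two, Matrix.tail_cons, Fin.val_zero, Fin.val_one, Fin.val_two,
    iteratedDeriv_zero]
  rw [E00, E01 θ y a b ha hθ, E02 θ y a b ha, E10 θ y a b ha hθ, E11 θ y a b ha hθ,
    E12 θ y a b ha hθ, E20 θ y a b ha hθ, E21 θ y a b ha hθ, E22 θ y a b ha hθ, ← hr2, Real.sqrt_sq hr0.le]
  field_simp
  ring
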